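/- Let μ ∈ ℝ, σ > 0, and τ ≥ 0. Let X₁, X₂ ~ N(μ, σ²) and Y₁, Y₂ ~ N(−μ, σ²) be mutually independent, and let X_{i,t} = f_t(X_i; τ), Y_{i,t} = f_t(Y_i; τ). With α = Φ((−τ − μ)/σ) and β = Φ((−τ + μ)/σ), the discrimination D_t = E[(X_{1,t} − Y_{1,t})²] / (E[(X_{1,t} − X_{2,t})²] + E[(Y_{1,t} − Y_{2,t})²]) equals (α + α² − 2αβ + β + β²) / (2(α − α² + 2αβ + β − β²)). -/

import Mathlib

open MeasureTheory ProbabilityTheory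

/-- The cumulative distribution function `Φ` of the standard normal distribution. -/
noncomputable def stdNormalCDF (x : ℝ) : ℝ :=
  ((ProbabilityTheory.gaussianReal 0 1) (Set.Iic x)).toReal

/-- Ternary quantization with threshold `τ ≥ 0`: `1` if `x > τ`, `-1` if `x < -τ`,
`0` otherwise. -/
noncomputable def ft (τ x : ℝ) : ℝ := if x > τ then 1 else if x < -τ then -1 else 0

lemma ft_measurable (τ : ℝ) : Measurable (ft τ) := by
  unfold ft
  exact Measurable.ite measurableSet_Ioi measurable_const
    (Measurable.ite measurableSet_Iio measurable_const measurable_const)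

lemma ft_abs_le (τ x : ℝ) : |ft τ x| ≤ 1 := by
  unfold ft; split_ifs <;> simp

lemma ft_eq (τ : ℝ) (hτ : 0 ≤ τ) : ft τ = fun x =>
    (Set.Ioi τ).indicator (1 : ℝ → ℝ) x - (Set.Iio (-τ)).indicator (1 : ℝ → ℝ) x := by
  funext x
  unfold ft
  by_cases h1 : x > τ
  · have h2 : ¬ x < -τ := by simp only [not_lt]; linarith
    simp [Set.indicator_apply, Set.mem_Ioi, Set.mem_Iio, h1, h2]
  · by_cases h2 : x < -τ
    · simp [Set.indicator_apply, Set.mem_Ioi, Set.mem_Iio, h1, h2]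
    · simp [Set.indicator_apply, Set.mem_Ioi, Set.mem_Iio, h1, h2]

lemma ft_sq_eq (τ : ℝ) (hτ : 0 ≤ τ) : (fun x => (ft τ x) ^ 2) = fun x =>
    (Set.Ioi τ).indicator (1 : ℝ → ℝ) x + (Set.Iio (-τ)).indicator (1 : ℝ → ℝ) x := by
  funext x
  unfold ft
  by_cases h1 : x > τ
  · have h2 : ¬ x < -τ := by simp only [not_lt]; linarith
    simp [Set.indicator_apply, Set.mem_Ioi, Set.mem_Iio, h1, h2]
  · by_cases h2 : x < -τ
    · simp [Set.indicator_apply, Set.mem_Ioi, Set.mem_Iio, h1, h2]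
    · simp [Set.indicator_apply, Set.mem_Ioi, Set.mem_Iio, h1, h2]

lemma gaussian_eq_map (m σ : ℝ) (hσ : 0 < σ) :
    gaussianReal m (Real.toNNReal (σ ^ 2)) = (gaussianReal 0 1).map (fun x => σ * x + m) := by
  have h1 : (gaussianReal 0 1).map (fun x => σ * x) =
      gaussianReal 0 (⟨σ ^ 2, sq_nonneg σ⟩ * 1) := by
    convert gaussianReal_map_const_mul (μ := 0) (v := 1) σ using 2
    · simp
    · rfl
  have h2 : (fun x : ℝ => σ * x + m) = (fun y => y + m) ∘ (fun x => σ * x) := rfl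
  rw [h2, ← Measure.map_map (measurable_id'.add_const m) (measurable_const_mul σ), h1,
    gaussianReal_map_add_const m]
  congr 1
  · rw [zero_add]
  · apply NNReal.coe_injective
    simp [Real.coe_toNNReal _ (sq_nonneg σ)]
    show σ ^ 2 = σ ^ 2 * 1; ring

lemma gauss01_singleton (x : ℝ) : (gaussianReal 0 1) {x} = 0 :=
  gaussianReal_absolutelyContinuous 0 one_ne_zero (by simp)

lemma gauss01_Iio (t : ℝ) : ((gaussianReal 0 1) (Set.Iio t)).toReal = stdNormalCDF t := by
  unfold stdNormalCDF
  rw [← Set.Iio_union_right, measure_union (by simp) (measurableSet_singleton t),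
    gauss01_singleton, add_zero]

lemma gauss01_Ioi (t : ℝ) : ((gaussianReal 0 1) (Set.Ioi t)).toReal = stdNormalCDF (-t) := by
  have hmap : (gaussianReal 0 1).map (fun x => (-1 : ℝ) * x) = gaussianReal 0 1 := by
    rw [gaussianReal_map_const_mul]
    congr 1
    · ring
    · apply NNReal.coe_injective; norm_num
  have : (gaussianReal 0 1) (Set.Ioi t) = (gaussianReal 0 1) (Set.Iio (-t)) := by
    conv_lhs => rw [← hmap]
    rw [Measure.map_apply (measurable_const_mul _) measurableSet_Ioi]
    congr 1
    ext x
    simp only [Set.mem_preimage, Set.mem_Ioi, Set.mem_Iio]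
    constructor <;> intro h <;> nlinarith
  rw [this, gauss01_Iio]

lemma gauss_Iio (m σ a : ℝ) (hσ : 0 < σ) :
    ((gaussianReal m (Real.toNNReal (σ ^ 2))) (Set.Iio a)).toReal
      = stdNormalCDF ((a - m) / σ) := by
  rw [gaussian_eq_map m σ hσ, Measure.map_apply (by fun_prop) measurableSet_Iio]
  have : (fun x : ℝ => σ * x + m) ⁻¹' Set.Iio a = Set.Iio ((a - m) / σ) := by
    ext x
    simp only [Set.mem_preimage, Set.mem_Iio, lt_div_iff₀ hσ]
    constructor <;> intro h <;> nlinarith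
  rw [this, gauss01_Iio]

lemma gauss_Ioi (m σ a : ℝ) (hσ : 0 < σ) :
    ((gaussianReal m (Real.toNNReal (σ ^ 2))) (Set.Ioi a)).toReal
      = stdNormalCDF ((m - a) / σ) := by
  rw [gaussian_eq_map m σ hσ, Measure.map_apply (by fun_prop) measurableSet_Ioi]
  have : (fun x : ℝ => σ * x + m) ⁻¹' Set.Ioi a = Set.Ioi ((a - m) / σ) := by
    ext x
    simp only [Set.mem_preimage, Set.mem_Ioi, div_lt_iff₀ hσ]
    constructor <;> intro h <;> nlinarith
  rw [this, gauss01_Ioi]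
  congr 1
  ring

lemma ft_integral {Ω : Type*} [MeasureSpace Ω] [IsProbabilityMeasure (ℙ : Measure Ω)]
    (τ m σ : ℝ) (hσ : 0 < σ) (hτ : 0 ≤ τ) (Z : Ω → ℝ) (hm : Measurable Z)
    (hZ : Measure.map Z ℙ = gaussianReal m (Real.toNNReal (σ ^ 2))) :
    ∫ ω, ft τ (Z ω) ∂ℙ = stdNormalCDF ((m - τ) / σ) - stdNormalCDF ((-τ - m) / σ) := by
  rw [← MeasureTheory.integral_map hm.aemeasurable (ft_measurable τ).aestronglyMeasurable, hZ,
    ft_eq τ hτ]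
  simp only []
  have h1 : ∫ y, (Set.Ioi τ).indicator 1 y - (Set.Iio (-τ)).indicator 1 y
        ∂(gaussianReal m (Real.toNNReal (σ ^ 2)))
      = (∫ y, (Set.Ioi τ).indicator 1 y ∂(gaussianReal m (Real.toNNReal (σ ^ 2))))
        - ∫ y, (Set.Iio (-τ)).indicator 1 y ∂(gaussianReal m (Real.toNNReal (σ ^ 2))) :=
    integral_sub ((integrable_const (1 : ℝ)).indicator measurableSet_Ioi)
      ((integrable_const (1 : ℝ)).indicator measurableSet_Iio)
  rw [h1, integral_indicator_one measurableSet_Ioi, integral_indicator_one measurableSet_Iio,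
    measureReal_def, measureReal_def, gauss_Ioi m σ τ hσ, gauss_Iio m σ (-τ) hσ]

lemma ft_sq_integral {Ω : Type*} [MeasureSpace Ω] [IsProbabilityMeasure (ℙ : Measure Ω)]
    (τ m σ : ℝ) (hσ : 0 < σ) (hτ : 0 ≤ τ) (Z : Ω → ℝ) (hm : Measurable Z)
    (hZ : Measure.map Z ℙ = gaussianReal m (Real.toNNReal (σ ^ 2))) :
    ∫ ω, (ft τ (Z ω)) ^ 2 ∂ℙ = stdNormalCDF ((m - τ) / σ) + stdNormalCDF ((-τ - m) / σ) := by
  have hmeas : Measurable (fun x => (ft τ x) ^ 2) := (ft_measurable τ).pow_const 2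
  have : ∫ ω, (ft τ (Z ω)) ^ 2 ∂ℙ = ∫ x, (ft τ x) ^ 2 ∂(Measure.map Z ℙ) :=
    (MeasureTheory.integral_map hm.aemeasurable hmeas.aestronglyMeasurable).symm
  rw [this, hZ, ft_sq_eq τ hτ]
  have h1 : ∫ y, (Set.Ioi τ).indicator 1 y + (Set.Iio (-τ)).indicator 1 y
        ∂(gaussianReal m (Real.toNNReal (σ ^ 2)))
      = (∫ y, (Set.Ioi τ).indicator 1 y ∂(gaussianReal m (Real.toNNReal (σ ^ 2))))
        + ∫ y, (Set.Iio (-τ)).indicator 1 y ∂(gaussianReal m (Real.toNNReal (σ ^ 2))) :=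
    integral_add ((integrable_const (1 : ℝ)).indicator measurableSet_Ioi)
      ((integrable_const (1 : ℝ)).indicator measurableSet_Iio)
  rw [h1, integral_indicator_one measurableSet_Ioi, integral_indicator_one measurableSet_Iio,
    measureReal_def, measureReal_def, gauss_Ioi m σ τ hσ, gauss_Iio m σ (-τ) hσ]

lemma integral_sub_sq_indep {Ω : Type*} [MeasureSpace Ω] [IsProbabilityMeasure (ℙ : Measure Ω)]
    (f g : Ω → ℝ) (hf : Measurable f) (hg : Measurable g)
    (hbf : ∀ ω, |f ω| ≤ 1) (hbg : ∀ ω, |g ω| ≤ 1) (hind : IndepFun f g ℙ) :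
    ∫ ω, (f ω - g ω) ^ 2 ∂ℙ
      = (∫ ω, (f ω) ^ 2 ∂ℙ) + (∫ ω, (g ω) ^ 2 ∂ℙ)
        - 2 * ((∫ ω, f ω ∂ℙ) * ∫ ω, g ω ∂ℙ) := by
  have bdd : ∀ (h : Ω → ℝ), Measurable h → (∀ ω, |h ω| ≤ 1) → Integrable h ℙ := fun h hm hb =>
    (integrable_const (1 : ℝ)).mono' hm.aestronglyMeasurable
      (ae_of_all _ fun ω => by simpa [Real.norm_eq_abs] using hb ω)
  have hif := bdd f hf hbf
  have hig := bdd g hg hbg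
  have hif2 : Integrable (fun ω => (f ω) ^ 2) ℙ :=
    bdd _ (hf.pow_const 2) fun ω => by
      rw [abs_pow]; exact pow_le_one₀ (abs_nonneg _) (hbf ω)
  have hig2 : Integrable (fun ω => (g ω) ^ 2) ℙ :=
    bdd _ (hg.pow_const 2) fun ω => by
      rw [abs_pow]; exact pow_le_one₀ (abs_nonneg _) (hbg ω)
  have hfg : Integrable (fun ω => f ω * g ω) ℙ :=
    bdd _ (hf.mul hg) fun ω => by
      rw [abs_mul]
      exact mul_le_one₀ (hbf ω) (abs_nonneg _) (hbg ω)
  have key : ∫ ω, f ω * g ω ∂ℙ = (∫ ω, f ω ∂ℙ) * ∫ ω, g ω ∂ℙ :=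
    hind.integral_fun_mul_eq_mul_integral hif.1 hig.1
  have hrw : (fun ω => (f ω - g ω) ^ 2)
      = fun ω => ((f ω) ^ 2 - 2 * (f ω * g ω)) + (g ω) ^ 2 := by
    funext ω; ring
  calc ∫ ω, (f ω - g ω) ^ 2 ∂ℙ
      = ∫ ω, ((f ω) ^ 2 - 2 * (f ω * g ω)) + (g ω) ^ 2 ∂ℙ := by rw [hrw]
    _ = (∫ ω, (f ω) ^ 2 - 2 * (f ω * g ω) ∂ℙ) + ∫ ω, (g ω) ^ 2 ∂ℙ :=
        integral_add (hif2.sub (hfg.const_mul 2)) hig2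
    _ = ((∫ ω, (f ω) ^ 2 ∂ℙ) - ∫ ω, 2 * (f ω * g ω) ∂ℙ) + ∫ ω, (g ω) ^ 2 ∂ℙ := by
        rw [integral_sub hif2 (hfg.const_mul 2)]
    _ = _ := by rw [integral_const_mul, key]; ring
/-- The discrimination of the ternary quantized Gaussian data equals
`(α + α² - 2αβ + β + β²)/(2(α - α² + 2αβ + β - β²))` where `α = Φ((-τ-μ)/σ)`,
`β = Φ((-τ+μ)/σ)`. -/
theorem discrimination_of_ternary_quantized_data
    {Ω : Type*} [MeasureSpace Ω] [IsProbabilityMeasure (ℙ : Measure Ω)]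
    (μ σ τ : ℝ) (hσpos : 0 < σ) (hτ : 0 ≤ τ)
    (X₁ X₂ Y₁ Y₂ : Ω → ℝ)
    (hmX₁ : Measurable X₁) (hmX₂ : Measurable X₂)
    (hmY₁ : Measurable Y₁) (hmY₂ : Measurable Y₂)
    (hX₁ : Measure.map X₁ ℙ = gaussianReal μ (Real.toNNReal (σ ^ 2)))
    (hX₂ : Measure.map X₂ ℙ = gaussianReal μ (Real.toNNReal (σ ^ 2)))
    (hY₁ : Measure.map Y₁ ℙ = gaussianReal (-μ) (Real.toNNReal (σ ^ 2)))
    (hY₂ : Measure.map Y₂ ℙ = gaussianReal (-μ) (Real.toNNReal (σ ^ 2)))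
    (hindep : iIndepFun ![X₁, X₂, Y₁, Y₂] ℙ)
    (α β : ℝ)
    (hα : α = stdNormalCDF ((-τ - μ) / σ))
    (hβ : β = stdNormalCDF ((-τ + μ) / σ)) :
    (∫ ω, (ft τ (X₁ ω) - ft τ (Y₁ ω)) ^ 2 ∂ℙ) /
        ((∫ ω, (ft τ (X₁ ω) - ft τ (X₂ ω)) ^ 2 ∂ℙ) +
          (∫ ω, (ft τ (Y₁ ω) - ft τ (Y₂ ω)) ^ 2 ∂ℙ))
      = (α + α ^ 2 - 2 * α * β + β + β ^ 2)
          / (2 * (α - α ^ 2 + 2 * α * β + β - β ^ 2)) := by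
  -- means of quantized variables
  have hEX₁ : ∫ ω, ft τ (X₁ ω) ∂ℙ = β - α := by
    rw [ft_integral τ μ σ hσpos hτ X₁ hmX₁ hX₁, hα, hβ]
    congr 2 <;> ring
  have hEX₂ : ∫ ω, ft τ (X₂ ω) ∂ℙ = β - α := by
    rw [ft_integral τ μ σ hσpos hτ X₂ hmX₂ hX₂, hα, hβ]
    congr 2 <;> ring
  have hEY₁ : ∫ ω, ft τ (Y₁ ω) ∂ℙ = α - β := by
    rw [ft_integral τ (-μ) σ hσpos hτ Y₁ hmY₁ hY₁, hα, hβ]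
    congr 2 <;> ring
  have hEY₂ : ∫ ω, ft τ (Y₂ ω) ∂ℙ = α - β := by
    rw [ft_integral τ (-μ) σ hσpos hτ Y₂ hmY₂ hY₂, hα, hβ]
    congr 2 <;> ring
  have hEX₁sq : ∫ ω, (ft τ (X₁ ω)) ^ 2 ∂ℙ = β + α := by
    rw [ft_sq_integral τ μ σ hσpos hτ X₁ hmX₁ hX₁, hα, hβ]
    congr 2 <;> ring
  have hEX₂sq : ∫ ω, (ft τ (X₂ ω)) ^ 2 ∂ℙ = β + α := by
    rw [ft_sq_integral τ μ σ hσpos hτ X₂ hmX₂ hX₂, hα, hβ]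
    congr 2 <;> ring
  have hEY₁sq : ∫ ω, (ft τ (Y₁ ω)) ^ 2 ∂ℙ = α + β := by
    rw [ft_sq_integral τ (-μ) σ hσpos hτ Y₁ hmY₁ hY₁, hα, hβ]
    congr 2 <;> ring
  have hEY₂sq : ∫ ω, (ft τ (Y₂ ω)) ^ 2 ∂ℙ = α + β := by
    rw [ft_sq_integral τ (-μ) σ hσpos hτ Y₂ hmY₂ hY₂, hα, hβ]
    congr 2 <;> ring
  -- independence of quantized pairs
  have iXY : IndepFun (fun ω => ft τ (X₁ ω)) (fun ω => ft τ (Y₁ ω)) ℙ :=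
    (hindep.indepFun (show (0 : Fin 4) ≠ 2 by decide)).comp
      (ft_measurable τ) (ft_measurable τ)
  have iXX : IndepFun (fun ω => ft τ (X₁ ω)) (fun ω => ft τ (X₂ ω)) ℙ :=
    (hindep.indepFun (show (0 : Fin 4) ≠ 1 by decide)).comp
      (ft_measurable τ) (ft_measurable τ)
  have iYY : IndepFun (fun ω => ft τ (Y₁ ω)) (fun ω => ft τ (Y₂ ω)) ℙ :=
    (hindep.indepFun (show (2 : Fin 4) ≠ 3 by decide)).comp
      (ft_measurable τ) (ft_measurable τ)
  have e1 : ∫ ω, (ft τ (X₁ ω) - ft τ (Y₁ ω)) ^ 2 ∂ℙ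
      = (∫ ω, (ft τ (X₁ ω)) ^ 2 ∂ℙ) + (∫ ω, (ft τ (Y₁ ω)) ^ 2 ∂ℙ)
        - 2 * ((∫ ω, ft τ (X₁ ω) ∂ℙ) * ∫ ω, ft τ (Y₁ ω) ∂ℙ) :=
    integral_sub_sq_indep _ _ ((ft_measurable τ).comp hmX₁) ((ft_measurable τ).comp hmY₁)
      (fun ω => ft_abs_le τ _) (fun ω => ft_abs_le τ _) iXY
  have e2 : ∫ ω, (ft τ (X₁ ω) - ft τ (X₂ ω)) ^ 2 ∂ℙ
      = (∫ ω, (ft τ (X₁ ω)) ^ 2 ∂ℙ) + (∫ ω, (ft τ (X₂ ω)) ^ 2 ∂ℙ)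
        - 2 * ((∫ ω, ft τ (X₁ ω) ∂ℙ) * ∫ ω, ft τ (X₂ ω) ∂ℙ) :=
    integral_sub_sq_indep _ _ ((ft_measurable τ).comp hmX₁) ((ft_measurable τ).comp hmX₂)
      (fun ω => ft_abs_le τ _) (fun ω => ft_abs_le τ _) iXX
  have e3 : ∫ ω, (ft τ (Y₁ ω) - ft τ (Y₂ ω)) ^ 2 ∂ℙ
      = (∫ ω, (ft τ (Y₁ ω)) ^ 2 ∂ℙ) + (∫ ω, (ft τ (Y₂ ω)) ^ 2 ∂ℙ)
        - 2 * ((∫ ω, ft τ (Y₁ ω) ∂ℙ) * ∫ ω, ft τ (Y₂ ω) ∂ℙ) :=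
    integral_sub_sq_indep _ _ ((ft_measurable τ).comp hmY₁) ((ft_measurable τ).comp hmY₂)
      (fun ω => ft_abs_le τ _) (fun ω => ft_abs_le τ _) iYY
  rw [e1, e2, e3, hEX₁, hEX₂, hEY₁, hEY₂, hEX₁sq, hEX₂sq, hEY₁sq, hEY₂sq]
  rw [show (β + α) + (α + β) - 2 * ((β - α) * (α - β))
        = 2 * (α + α ^ 2 - 2 * α * β + β + β ^ 2) by ring,
    show ((β + α) + (β + α) - 2 * ((β - α) * (β - α)))
          + ((α + β) + (α + β) - 2 * ((α - β) * (α - β)))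
        = 2 * (2 * (α - α ^ 2 + 2 * α * β + β - β ^ 2)) by ring,
    mul_div_mul_left _ _ (two_ne_zero)]
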